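/- arXiv:2309.15270 — 3 statements merged into one kernel-verified Lean document; each statement's English description precedes it below -/
import Mathlib

section
/- Every word of the form s·(u·v)^k·w·v, where u·v·w is self-join-free and s is a proper suffix of u·v, satisfies condition C2: (i) whenever the word equals a·R·b·R·c for a letter R, the word is a factor of a·R·b·R·b·R·c; and (ii) whenever the word equals a·R·b1·R·b2·R·c for three consecutive occurrences of R, either b1 = b2 or R·c is a prefix of R·b1. -/
/-- k-fold concatenation of a word with itself. -/
def wpow {α : Type*} (w : List α) : ℕ → List α
  | 0 => []
  | k + 1 => w ++ wpow w k

theorem wpow_add {α : Type*} (p : List α) (a b : ℕ) :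
    wpow p (a + b) = wpow p a ++ wpow p b := by
  induction a with
  | zero => simp [wpow]
  | succ n ih =>
    rw [Nat.succ_add]
    simp only [wpow, ih, List.append_assoc]

theorem wpow_comm {α : Type*} (p : List α) (a b : ℕ) :
    wpow p a ++ wpow p b = wpow p b ++ wpow p a := by
  rw [← wpow_add, ← wpow_add, Nat.add_comm]

theorem wpow_rot {α : Type*} (x y : List α) (m : ℕ) :
    x ++ wpow (y ++ x) m = wpow (x ++ y) m ++ x := by
  induction m with
  | zero => simp [wpow]
  | succ n ih =>
    simp only [wpow]
    calc x ++ ((y ++ x) ++ wpow (y ++ x) n)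
        = (x ++ y) ++ (x ++ wpow (y ++ x) n) := by simp [List.append_assoc]
      _ = (x ++ y) ++ (wpow (x ++ y) n ++ x) := by rw [ih]
      _ = ((x ++ y) ++ wpow (x ++ y) n) ++ x := by simp [List.append_assoc]

theorem wpow_length {α : Type*} (p : List α) (k : ℕ) :
    (wpow p k).length = k * p.length := by
  induction k with
  | zero => simp [wpow]
  | succ n ih => simp [wpow, ih, Nat.succ_mul, Nat.add_comm]

theorem split_occ {α : Type*} {A B x y : List α} {R : α}
    (h : A ++ B = x ++ [R] ++ y) :
    (∃ y₁, A = x ++ [R] ++ y₁ ∧ y = y₁ ++ B) ∨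
    (∃ x₁, B = x₁ ++ [R] ++ y ∧ x = A ++ x₁) := by
  induction A generalizing x with
  | nil =>
    right
    exact ⟨x, by simpa using h, by simp⟩
  | cons a A ih =>
    cases x with
    | nil =>
      left
      simp only [List.nil_append, List.cons_append, List.cons.injEq] at h
      obtain ⟨rfl, rfl⟩ := h
      exact ⟨A, rfl, rfl⟩
    | cons b x =>
      simp only [List.cons_append, List.cons.injEq] at h
      obtain ⟨rfl, h⟩ := h
      rcases ih h with ⟨y₁, hA, hy⟩ | ⟨x₁, hB, hx⟩
      · exact Or.inl ⟨y₁, by simp [hA], hy⟩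
      · exact Or.inr ⟨x₁, hB, by simp [hx]⟩

theorem occ_pow {α : Type*} {p x y : List α} {R : α} :
    ∀ k, wpow p k = x ++ [R] ++ y →
      ∃ e f j, p = e ++ [R] ++ f ∧ y = f ++ wpow p j := by
  intro k
  induction k generalizing x y with
  | zero => intro h; simp [wpow] at h
  | succ n ih =>
    intro h
    simp only [wpow] at h
    rcases split_occ h with ⟨y₁, hA, hy⟩ | ⟨x₁, hB, _⟩
    · exact ⟨x, y₁, n, hA, hy⟩
    · exact ih hB

theorem nodup_mid {α : Type*} {e f : List α} {R : α}
    (h : (e ++ [R] ++ f).Nodup) : R ∉ e ∧ R ∉ f := by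
  rw [List.append_assoc, List.nodup_append] at h
  obtain ⟨-, h2, hdisj⟩ := h
  rw [List.nodup_append] at h2
  constructor
  · intro hm; exact hdisj R hm R (by simp) rfl
  · intro hm; exact h2.2.2 R (by simp) R hm rfl

theorem occ_unique {α : Type*} {e f e' f' : List α} {R : α}
    (hnd : (e ++ [R] ++ f).Nodup)
    (h2 : e ++ [R] ++ f = e' ++ [R] ++ f') : e = e' ∧ f = f' := by
  obtain ⟨hRe, hRf⟩ := nodup_mid hnd
  rw [List.append_assoc] at h2
  rcases split_occ h2 with ⟨y₁, hA, _⟩ | ⟨x₁, hB, hx⟩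
  · exact absurd (hA ▸ (by simp)) hRe
  · cases x₁ with
    | nil =>
      simp only [List.nil_append, List.cons_append, List.nil_append,
        List.cons.injEq] at hB hx ⊢
      exact ⟨by simpa using hx.symm, by simpa using hB⟩
    | cons a t =>
      simp only [List.cons_append, List.nil_append, List.cons.injEq] at hB
      obtain ⟨rfl, hf⟩ := hB
      exact absurd (hf ▸ (by simp)) hRf

theorem occ_main {α : Type*} {u v w s : List α} {k : ℕ} {x y : List α} {R : α}
    (hnd : (u ++ v ++ w).Nodup) (hsuf : s <:+ u ++ v)
    (h : s ++ (wpow (u ++ v) k ++ (w ++ v)) = x ++ [R] ++ y) :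
    (∃ e f, u ++ v = e ++ [R] ++ f ∧
      ((∃ j, y = f ++ (wpow (u ++ v) j ++ (w ++ v))) ∨
       (y = f ∧ ∃ v1, v = v1 ++ [R] ++ f))) ∨
    (R ∉ u ++ v ∧ R ∉ y) := by
  obtain ⟨r, hr⟩ := hsuf
  rcases split_occ h with ⟨y₁, hs, hy⟩ | ⟨x₁, hB, _⟩
  · left
    refine ⟨r ++ x, y₁, ?_, Or.inl ⟨k, ?_⟩⟩
    · rw [← hr, hs]; simp [List.append_assoc]
    · rw [hy]
  · rcases split_occ hB with ⟨y₂, hP, hy⟩ | ⟨x₂, hB2, _⟩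
    · obtain ⟨e, f, j, hp, hy₂⟩ := occ_pow _ hP
      exact Or.inl ⟨e, f, hp, Or.inl ⟨j, by rw [hy, hy₂, List.append_assoc]⟩⟩
    · rcases split_occ hB2 with ⟨y₃, hw, hy⟩ | ⟨x₃, hv, _⟩
      · right
        have hnd' : ((u ++ v) ++ w).Nodup := hnd
        rw [List.nodup_append] at hnd'
        obtain ⟨-, hndw, hdisj⟩ := hnd'
        have hRw : R ∈ w := by rw [hw]; simp
        have hRuv : R ∉ u ++ v := fun hm => hdisj R hm R hRw rfl
        have hRy₃ : R ∉ y₃ := (nodup_mid (hw ▸ hndw)).2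
        refine ⟨hRuv, ?_⟩
        rw [hy]
        simp only [List.mem_append]
        rintro (h1 | h2)
        · exact hRy₃ h1
        · exact hRuv (by simp [h2])
      · left
        exact ⟨u ++ x₃, y, by rw [hv]; simp [List.append_assoc],
          Or.inr ⟨rfl, x₃, hv⟩⟩

theorem gap0 {α : Type*} {e f b : List α} {R : α} {l j : ℕ}
    (heq : b ++ [R] ++ f ++ wpow (e ++ [R] ++ f) l
         = f ++ wpow (e ++ [R] ++ f) j) :
    ∃ m, 1 ≤ m ∧ j = m + l ∧ b ++ [R] = wpow (f ++ e ++ [R]) m := by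
  set p := e ++ [R] ++ f with hp
  have hn : 0 < p.length := by simp [hp]
  have hlen := congrArg List.length heq
  simp only [List.length_append, wpow_length] at hlen
  have hlj : l < j := by
    by_contra hc
    push_neg at hc
    have := Nat.mul_le_mul_right p.length hc
    simp at hlen
    omega
  refine ⟨j - l, by omega, by omega, ?_⟩
  have hj : j = (j - l) + l := by omega
  rw [hj, wpow_add] at heq
  have heq2 : (b ++ [R] ++ f) ++ wpow p l = (f ++ wpow p (j - l)) ++ wpow p l := by
    simpa [List.append_assoc] using heq
  have heq3 := List.append_cancel_right heq2
  have hrot : f ++ wpow ((e ++ [R]) ++ f) (j - l) = wpow (f ++ (e ++ [R])) (j - l) ++ f :=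
    wpow_rot f (e ++ [R]) (j - l)
  rw [hp] at heq3
  have heq4 : (b ++ [R]) ++ f = wpow (f ++ e ++ [R]) (j - l) ++ f := by
    calc (b ++ [R]) ++ f = f ++ wpow (e ++ [R] ++ f) (j - l) := heq3
      _ = wpow (f ++ (e ++ [R])) (j - l) ++ f := hrot
      _ = wpow (f ++ e ++ [R]) (j - l) ++ f := by rw [List.append_assoc f e [R]]
  exact List.append_cancel_right heq4

theorem gap {α : Type*} {e f b : List α} {R : α} {l j : ℕ}
    (hnd : (e ++ [R] ++ f).Nodup)
    (heq : b ++ [R] ++ f ++ wpow (e ++ [R] ++ f) l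
         = f ++ wpow (e ++ [R] ++ f) j)
    (hR : R ∉ b) : b = f ++ e := by
  obtain ⟨m, hm1, -, hbm⟩ := gap0 heq
  obtain ⟨m', rfl⟩ : ∃ m', m = m' + 1 := ⟨m - 1, by omega⟩
  cases m' with
  | zero =>
    simp only [wpow, List.append_nil] at hbm
    have : b ++ [R] = (f ++ e) ++ [R] := by simpa [List.append_assoc] using hbm
    exact List.append_cancel_right this
  | succ m'' =>
    exfalso
    simp only [wpow] at hbm
    -- b ++ [R] = (f ++ e ++ [R]) ++ ((f ++ e ++ [R]) ++ wpow (f ++ e ++ [R]) m'')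
    have hpre : (f ++ e ++ [R]) <+: b ++ [R] := ⟨_, hbm.symm⟩
    have hlenb : (f ++ e ++ [R]).length ≤ b.length := by
      have := congrArg List.length hbm
      simp [wpow_length] at this ⊢
      omega
    have hpb : (f ++ e ++ [R]) <+: b :=
      List.prefix_of_prefix_length_le hpre (List.prefix_append b [R]) (by simpa using hlenb)
    exact hR (hpb.subset (by simp))

theorem rot3 {α : Type*} (e f : List α) (R : α) (m : ℕ) :
    wpow (f ++ e ++ [R]) m ++ f = f ++ wpow (e ++ [R] ++ f) m := by
  calc wpow ((f ++ e) ++ [R]) m ++ f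
      = wpow (f ++ (e ++ [R])) m ++ f := by rw [List.append_assoc]
    _ = f ++ wpow ((e ++ [R]) ++ f) m := (wpow_rot f (e ++ [R]) m).symm

/-- Part (i) of condition C2 (= condition C3). -/
def CondC3 {α : Type*} (q : List α) : Prop :=
  ∀ (a b c : List α) (R : α), q = a ++ [R] ++ b ++ [R] ++ c →
    q <:+: a ++ [R] ++ b ++ [R] ++ b ++ [R] ++ c

/-- Part (ii) of condition C2: for consecutive occurrences of `R`,
either `b1 = b2` or `R·c` is a prefix of `R·b1`. -/
def CondC2ii {α : Type*} (q : List α) : Prop :=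
  ∀ (a b1 b2 c : List α) (R : α),
    q = a ++ [R] ++ b1 ++ [R] ++ b2 ++ [R] ++ c → R ∉ b1 → R ∉ b2 →
    b1 = b2 ∨ ([R] ++ c) <+: ([R] ++ b1)

/-- Condition C2. -/
def CondC2 {α : Type*} (q : List α) : Prop := CondC3 q ∧ CondC2ii q

/-- Every word of the form `s·(u·v)^k·w·v` with `u·v·w` self-join-free and `s`
a proper suffix of `u·v` satisfies C2. -/
theorem stmt_9 {α : Type*} (u v w s : List α) (k : ℕ)
    (hsjf : (u ++ v ++ w).Nodup)
    (hsuf : s <:+ u ++ v) (hproper : s ≠ u ++ v) :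
    CondC2 (s ++ wpow (u ++ v) k ++ w ++ v) := by
  obtain ⟨r, hr⟩ := hsuf
  have hnduv : (u ++ v).Nodup := (List.nodup_append.mp hsjf).1
  constructor
  · -- CondC3
    intro a b c R hq
    have h1 : s ++ (wpow (u ++ v) k ++ (w ++ v)) = a ++ [R] ++ (b ++ [R] ++ c) := by
      simpa [List.append_assoc] using hq
    rcases occ_main hsjf ⟨r, hr⟩ h1 with ⟨e, f, hp, hcase1⟩ | ⟨-, hRy⟩
    swap
    · exact absurd (show R ∈ b ++ [R] ++ c by simp) hRy
    have hnd2 : (e ++ [R] ++ f).Nodup := by rw [← hp]; exact hnduv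
    have hRf : R ∉ f := (nodup_mid hnd2).2
    have hE1 : ∃ i, b ++ [R] ++ c = f ++ (wpow (u ++ v) i ++ (w ++ v)) := by
      rcases hcase1 with ⟨i, hi⟩ | ⟨hyf, -⟩
      · exact ⟨i, by simpa [List.append_assoc] using hi⟩
      · exact absurd (hyf ▸ (show R ∈ b ++ [R] ++ c by simp)) hRf
    obtain ⟨i, hE1⟩ := hE1
    have h2 : s ++ (wpow (u ++ v) k ++ (w ++ v)) = (a ++ [R] ++ b) ++ [R] ++ c := by
      simpa [List.append_assoc] using hq
    rcases occ_main hsjf ⟨r, hr⟩ h2 with ⟨e', f', hp', hcase2⟩ | ⟨hRp, -⟩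
    swap
    · exact absurd (show R ∈ u ++ v by rw [hp]; simp) hRp
    obtain ⟨he, hf⟩ := occ_unique hnd2 (hp.symm.trans hp')
    subst he; subst hf
    rcases hcase2 with ⟨j, hE2⟩ | ⟨hE3, -⟩
    · -- periodic case
      have hE12 := hE1
      rw [hE2] at hE12
      have t2 : (b ++ [R] ++ f ++ wpow (u ++ v) j) ++ (w ++ v)
          = (f ++ wpow (u ++ v) i) ++ (w ++ v) := by
        simpa [List.append_assoc] using hE12
      have heq := List.append_cancel_right t2
      rw [hp] at heq
      obtain ⟨m, hm1, hmi, hbm⟩ := gap0 heq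
      have hbf : b ++ [R] ++ f = f ++ wpow (u ++ v) m := by
        rw [hp]
        calc (b ++ [R]) ++ f = wpow (f ++ e ++ [R]) m ++ f := by rw [hbm]
          _ = f ++ wpow (e ++ [R] ++ f) m := rot3 e f R m
      have h12 := h1
      rw [hE1] at h12
      have t3 : (s ++ wpow (u ++ v) k) ++ (w ++ v)
          = (a ++ [R] ++ f ++ wpow (u ++ v) i) ++ (w ++ v) := by
        simpa [List.append_assoc] using h12
      have ha := List.append_cancel_right t3
      have key : a ++ [R] ++ b ++ [R] ++ b ++ [R] ++ c
          = wpow (s ++ r) m ++ (s ++ wpow (u ++ v) k ++ w ++ v) := by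
        calc a ++ [R] ++ b ++ [R] ++ b ++ [R] ++ c
            = (a ++ [R]) ++ ((b ++ [R]) ++ (b ++ [R] ++ c)) := by
              simp [List.append_assoc]
          _ = (a ++ [R]) ++ ((b ++ [R]) ++ (f ++ (wpow (u ++ v) i ++ (w ++ v)))) := by
              rw [hE1]
          _ = (a ++ [R]) ++ ((b ++ [R] ++ f) ++ (wpow (u ++ v) i ++ (w ++ v))) := by
              simp [List.append_assoc]
          _ = (a ++ [R]) ++ ((f ++ wpow (u ++ v) m) ++ (wpow (u ++ v) i ++ (w ++ v))) := by
              rw [hbf]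
          _ = ((a ++ [R] ++ f) ++ (wpow (u ++ v) m ++ wpow (u ++ v) i)) ++ (w ++ v) := by
              simp [List.append_assoc]
          _ = ((a ++ [R] ++ f) ++ (wpow (u ++ v) i ++ wpow (u ++ v) m)) ++ (w ++ v) := by
              rw [wpow_comm]
          _ = ((a ++ [R] ++ f ++ wpow (u ++ v) i) ++ wpow (u ++ v) m) ++ (w ++ v) := by
              simp [List.append_assoc]
          _ = ((s ++ wpow (u ++ v) k) ++ wpow (u ++ v) m) ++ (w ++ v) := by rw [← ha]
          _ = (s ++ (wpow (u ++ v) k ++ wpow (u ++ v) m)) ++ (w ++ v) := by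
              simp [List.append_assoc]
          _ = (s ++ (wpow (u ++ v) m ++ wpow (u ++ v) k)) ++ (w ++ v) := by
              rw [wpow_comm]
          _ = ((s ++ wpow (r ++ s) m) ++ wpow (u ++ v) k) ++ (w ++ v) := by
              rw [hr]; simp [List.append_assoc]
          _ = ((wpow (s ++ r) m ++ s) ++ wpow (u ++ v) k) ++ (w ++ v) := by
              rw [wpow_rot]
          _ = wpow (s ++ r) m ++ (s ++ wpow (u ++ v) k ++ w ++ v) := by
              simp [List.append_assoc]
      exact ⟨wpow (s ++ r) m, [], by rw [List.append_nil]; exact key.symm⟩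
    · -- c = f : q is a prefix of the pumped word
      refine ⟨[], wpow (u ++ v) i ++ (w ++ v), ?_⟩
      rw [List.nil_append, hq]
      rw [hE3] at hE1 ⊢
      calc (a ++ [R] ++ b ++ [R] ++ f) ++ (wpow (u ++ v) i ++ (w ++ v))
          = (a ++ [R] ++ b ++ [R]) ++ (f ++ (wpow (u ++ v) i ++ (w ++ v))) := by
            simp [List.append_assoc]
        _ = (a ++ [R] ++ b ++ [R]) ++ (b ++ [R] ++ f) := by rw [← hE1]
        _ = a ++ [R] ++ b ++ [R] ++ b ++ [R] ++ f := by simp [List.append_assoc]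
  · -- CondC2ii
    intro a b1 b2 c R hq hb1 hb2
    have h1 : s ++ (wpow (u ++ v) k ++ (w ++ v))
        = a ++ [R] ++ (b1 ++ [R] ++ (b2 ++ [R] ++ c)) := by
      simpa [List.append_assoc] using hq
    rcases occ_main hsjf ⟨r, hr⟩ h1 with ⟨e, f, hp, hcase1⟩ | ⟨-, hRy⟩
    swap
    · exact absurd (show R ∈ b1 ++ [R] ++ (b2 ++ [R] ++ c) by simp) hRy
    have hnd2 : (e ++ [R] ++ f).Nodup := by rw [← hp]; exact hnduv
    have hRf : R ∉ f := (nodup_mid hnd2).2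
    have hE1 : ∃ i, b1 ++ [R] ++ (b2 ++ [R] ++ c) = f ++ (wpow (u ++ v) i ++ (w ++ v)) := by
      rcases hcase1 with ⟨i, hi⟩ | ⟨hyf, -⟩
      · exact ⟨i, by simpa [List.append_assoc] using hi⟩
      · exact absurd (hyf ▸ (show R ∈ b1 ++ [R] ++ (b2 ++ [R] ++ c) by simp)) hRf
    obtain ⟨i, hE1⟩ := hE1
    have h2 : s ++ (wpow (u ++ v) k ++ (w ++ v))
        = (a ++ [R] ++ b1) ++ [R] ++ (b2 ++ [R] ++ c) := by
      simpa [List.append_assoc] using hq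
    rcases occ_main hsjf ⟨r, hr⟩ h2 with ⟨e', f', hp', hcase2⟩ | ⟨hRp, -⟩
    swap
    · exact absurd (show R ∈ u ++ v by rw [hp]; simp) hRp
    obtain ⟨he, hf⟩ := occ_unique hnd2 (hp.symm.trans hp')
    subst he; subst hf
    have hE2 : ∃ j, b2 ++ [R] ++ c = f ++ (wpow (u ++ v) j ++ (w ++ v)) := by
      rcases hcase2 with ⟨j, hj⟩ | ⟨hyf, -⟩
      · exact ⟨j, by simpa [List.append_assoc] using hj⟩
      · exact absurd (hyf ▸ (show R ∈ b2 ++ [R] ++ c by simp)) hRf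
    obtain ⟨j, hE2⟩ := hE2
    have h3 : s ++ (wpow (u ++ v) k ++ (w ++ v))
        = (a ++ [R] ++ b1 ++ [R] ++ b2) ++ [R] ++ c := by
      simpa [List.append_assoc] using hq
    rcases occ_main hsjf ⟨r, hr⟩ h3 with ⟨e'', f'', hp'', hcase3⟩ | ⟨hRp, -⟩
    swap
    · exact absurd (show R ∈ u ++ v by rw [hp]; simp) hRp
    obtain ⟨he, hf⟩ := occ_unique hnd2 (hp.symm.trans hp'')
    subst he; subst hf
    rcases hcase3 with ⟨l, hE3⟩ | ⟨hE3, -⟩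
    · -- b1 = b2 = f ++ e
      left
      have hE23 := hE2
      rw [hE3] at hE23
      have t2 : (b2 ++ [R] ++ f ++ wpow (u ++ v) l) ++ (w ++ v)
          = (f ++ wpow (u ++ v) j) ++ (w ++ v) := by
        simpa [List.append_assoc] using hE23
      have heq2 := List.append_cancel_right t2
      rw [hp] at heq2
      have hb2' := gap hnd2 heq2 hb2
      have hE12 := hE1
      rw [hE2] at hE12
      have t1 : (b1 ++ [R] ++ f ++ wpow (u ++ v) j) ++ (w ++ v)
          = (f ++ wpow (u ++ v) i) ++ (w ++ v) := by
        simpa [List.append_assoc] using hE12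
      have heq1 := List.append_cancel_right t1
      rw [hp] at heq1
      have hb1' := gap hnd2 heq1 hb1
      rw [hb1', hb2']
    · -- R ++ c is a prefix of R ++ b1
      right
      have hpre1 : b1 <+: f ++ (wpow (u ++ v) i ++ (w ++ v)) :=
        ⟨[R] ++ (b2 ++ [R] ++ c), by simpa [List.append_assoc] using hE1⟩
      have hpre2 : f <+: f ++ (wpow (u ++ v) i ++ (w ++ v)) := List.prefix_append _ _
      have hf1 : f <+: b1 := by
        rcases le_total f.length b1.length with hle | hle
        · exact List.prefix_of_prefix_length_le hpre2 hpre1 hle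
        · have hb1f : b1 <+: f := List.prefix_of_prefix_length_le hpre1 hpre2 hle
          obtain ⟨d, hd⟩ := hb1f
          cases d with
          | nil =>
            simp only [List.append_nil] at hd
            simp only [hd]
            exact List.prefix_rfl
          | cons a' t =>
            exfalso
            have hthis : b1 ++ ([R] ++ (b2 ++ [R] ++ c))
                = b1 ++ ((a' :: t) ++ (wpow (u ++ v) i ++ (w ++ v))) := by
              rw [← hd] at hE1
              simpa [List.append_assoc] using hE1
            have h' := List.append_cancel_left hthis
            have hRa : R = a' := by
              simpa using congrArg (fun (l : List α) => l.head?) h'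
            apply hRf
            rw [← hd, hRa]
            simp
      obtain ⟨t, ht⟩ := hf1
      rw [hE3]
      exact ⟨t, by rw [← ht]; simp [List.append_assoc]⟩
end

section
/- Let q be a word with a factor of the form last(u)·w·u·v·u·first(v), where u, v, w are words with u and v nonempty, u·v·w self-join-free. Then q violates condition C2; specifically, q has a factor R·(w·û·R·S·v̂·û·R)·S with three consecutive occurrences of R (where u = û·R and v = S·v̂), such that w·û ≠ S·v̂·û and R·S is not a prefix of R·w·û. -/
/-- If `q` has a factor `last(u)·w·u·v·u·first(v)` with `u, v` nonempty and
`u·v·w` self-join-free (here `u = û·R`, `v = S·v̂`), then `q` violates C2;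
specifically `q` has the factor `R·(w·û)·R·(S·v̂·û)·R·S` with three consecutive
occurrences of `R`, where `w·û ≠ S·v̂·û` and `R·S` is not a prefix of `R·w·û`. -/
theorem stmt_10 {α : Type*} (q : List α) (uh vh w : List α) (R S : α)
    (hsjf : ((uh ++ [R]) ++ ([S] ++ vh) ++ w).Nodup)
    (hfac : ([R] ++ w ++ (uh ++ [R]) ++ ([S] ++ vh) ++ (uh ++ [R]) ++ [S]) <:+: q) :
    ¬ CondC2 q ∧
    ([R] ++ (w ++ uh) ++ [R] ++ ([S] ++ vh ++ uh) ++ [R] ++ [S]) <:+: q ∧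
    R ∉ w ++ uh ∧ R ∉ [S] ++ vh ++ uh ∧
    w ++ uh ≠ [S] ++ vh ++ uh ∧
    ¬ (([R] ++ [S]) <+: ([R] ++ w ++ uh)) := by
  simp [List.nodup_append] at hsjf
  obtain ⟨-, ⟨⟨hRS, hRvh, hRw⟩, ⟨hSvh, hSw⟩, -, -, -⟩, huhall⟩ := hsjf
  have hRuh : R ∉ uh := fun h => (huhall R h).1 rfl
  have hSuh : S ∉ uh := fun h => (huhall S h).2.1 rfl
  have hfac' : ([R] ++ (w ++ uh) ++ [R] ++ ([S] ++ vh ++ uh) ++ [R] ++ [S]) <:+: q := by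
    have : ([R] ++ (w ++ uh) ++ [R] ++ ([S] ++ vh ++ uh) ++ [R] ++ [S])
        = ([R] ++ w ++ (uh ++ [R]) ++ ([S] ++ vh) ++ (uh ++ [R]) ++ [S]) := by
      simp [List.append_assoc]
    rw [this]; exact hfac
  have hRb1 : R ∉ w ++ uh := by
    simp only [List.mem_append]
    rintro (h | h)
    · exact hRw h
    · exact hRuh h
  have hRb2 : R ∉ [S] ++ vh ++ uh := by
    simp only [List.mem_append, List.mem_singleton]
    rintro ((h | h) | h)
    · exact hRS h
    · exact hRvh h
    · exact hRuh h
  have hne : w ++ uh ≠ [S] ++ vh ++ uh := by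
    intro h
    have : w = [S] ++ vh := List.append_cancel_right (by simpa [List.append_assoc] using h)
    exact hSw (by simp [this])
  have hnpre : ¬ (([R] ++ [S]) <+: ([R] ++ w ++ uh)) := by
    rintro ⟨t, ht⟩
    have : S ∈ w ++ uh := by
      have h' : R :: S :: t = R :: (w ++ uh) := by simpa using ht
      have h'' : S :: t = w ++ uh := by injection h'
      rw [← h'']; simp
    rcases List.mem_append.mp this with h | h
    · exact hSw h
    · exact hSuh h
  refine ⟨?_, hfac', hRb1, hRb2, hne, hnpre⟩
  rintro ⟨-, h2⟩
  obtain ⟨x, y, hq⟩ := hfac'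
  have hq' : q = x ++ [R] ++ (w ++ uh) ++ [R] ++ ([S] ++ vh ++ uh) ++ [R] ++ ([S] ++ y) := by
    rw [← hq]; simp [List.append_assoc]
  rcases h2 x (w ++ uh) ([S] ++ vh ++ uh) ([S] ++ y) R hq' hRb1 hRb2 with h | h
  · exact hne h
  · exact hnpre (((List.prefix_append ([R] ++ [S]) y).trans (by simpa [List.append_assoc] using h)))
end

section
/- For every word q over an alphabet, if there exist a natural number k ≥ 0 and words u, v, w such that u·v·w is self-join-free and q is a factor of u·w·(u·v)^k (condition B3), then q satisfies condition C3: whenever q = a·R·b·R·c for a letter R and words a, b, c, q is a factor of a·R·b·R·b·R·c. -/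
/-- B3: `q` is a factor of `u·w·(u·v)^k` for some self-join-free `u·v·w`. -/
def CondB3 {α : Type*} (q : List α) : Prop :=
  ∃ (k : ℕ) (u v w : List α), (u ++ v ++ w).Nodup ∧
    q <:+: u ++ w ++ wpow (u ++ v) k

namespace Stmt19Aux

variable {α : Type*}

lemma wpow_length (t : List α) (k : ℕ) : (wpow t k).length = k * t.length := by
  induction k with
  | zero => simp [wpow]
  | succ k ih => simp [wpow, ih]; ring

lemma wpow_getElem? (t : List α) (k y : ℕ) (hy : y < k * t.length) :
    (wpow t k)[y]? = t[y % t.length]? := by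
  induction k generalizing y with
  | zero => simp at hy
  | succ k ih =>
    have hsum : (k + 1) * t.length = k * t.length + t.length := by ring
    show (t ++ wpow t k)[y]? = _
    rcases lt_or_ge y t.length with h | h
    · rw [List.getElem?_append_left h, Nat.mod_eq_of_lt h]
    · rw [List.getElem?_append_right h, ih (y - t.length) (by omega)]
      congr 1
      conv_rhs => rw [show y = (y - t.length) + t.length by omega, Nat.add_mod_right]

lemma prefix_of_getElem? {l₁ l₂ : List α}
    (h : ∀ i, i < l₁.length → l₁[i]? = l₂[i]?) (hl : l₁.length ≤ l₂.length) : l₁ <+: l₂ := by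
  rw [List.prefix_iff_eq_take]
  apply List.ext_getElem?
  intro n
  rw [List.getElem?_take]
  split
  · exact h n ‹_›
  · exact List.getElem?_eq_none (by omega)

lemma suffix_of_getElem? {l₁ l₂ : List α}
    (h : ∀ i, i < l₁.length → l₁[i]? = l₂[(l₂.length - l₁.length) + i]?)
    (hl : l₁.length ≤ l₂.length) : l₁ <:+ l₂ := by
  have heq : l₁ = l₂.drop (l₂.length - l₁.length) := by
    apply List.ext_getElem?
    intro n
    rw [List.getElem?_drop]
    rcases lt_or_ge n l₁.length with hn | hn
    · exact h n hn
    · rw [List.getElem?_eq_none (by omega), List.getElem?_eq_none (by omega)]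
  rw [heq]
  exact List.drop_suffix _ _

lemma mod_shift (p X d : ℕ) (hd : p ∣ d) : (X + d) % p = X % p := by
  obtain ⟨e, rfl⟩ := hd
  exact Nat.add_mul_mod_self_left X p e

lemma index_trick (p B x1 x2 d x : ℕ) (hmod : (x2 - B) % p = x1) (hB : B ≤ x2)
    (hx2 : x2 = x1 + d) (hx : x < p) (hxx : x ≤ x1) :
    B ≤ x + d ∧ (x + d - B) % p = x := by
  have h1 : x2 - B = p * ((x2 - B) / p) + x1 := by
    conv_lhs => rw [← Nat.div_add_mod (x2 - B) p]
    rw [hmod]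
  generalize hM : p * ((x2 - B) / p) = M at h1
  refine ⟨by omega, ?_⟩
  have h2 : x + d - B = x + M := by omega
  rw [h2, ← hM, Nat.add_mul_mod_self_left, Nat.mod_eq_of_lt hx]

lemma key (u v w : List α) (k : ℕ) (hnd : (u ++ v ++ w).Nodup)
    (a b c : List α) (R : α)
    (hinf : a ++ [R] ++ b ++ [R] ++ c <:+: u ++ w ++ wpow (u ++ v) k) :
    c <+: b ++ [R] ++ c ∨ a <:+ a ++ [R] ++ b := by
  obtain ⟨pre, suf, hs⟩ := hinf
  set q : List α := a ++ [R] ++ b ++ [R] ++ c with hqdef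
  set s : List α := u ++ w ++ wpow (u ++ v) k with hsdef
  set t : List α := u ++ v with htdef
  obtain ⟨hndt, hndw, hdisj⟩ := List.nodup_append.mp hnd
  have hqlen : q.length = a.length + 1 + b.length + 1 + c.length := by
    simp [hqdef]; omega
  have htlen : t.length = u.length + v.length := by simp [htdef]
  have hslen : s.length = u.length + w.length + k * t.length := by
    simp [hsdef, wpow_length, htdef]; omega
  have hlen : pre.length + q.length ≤ s.length := by
    have := congrArg List.length hs
    simp at this
    omega
  have hsq : ∀ j, j < q.length → s[pre.length + j]? = q[j]? := by
    intro j hj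
    rw [← hs, List.getElem?_append_left
        (by simp only [List.length_append]; omega),
      List.getElem?_append_right (by omega)]
    congr 1
    omega
  have hstx : ∀ x, u.length + w.length ≤ x → x < s.length →
      s[x]? = t[(x - (u.length + w.length)) % t.length]? := by
    intro x hx hx'
    rw [hsdef, List.getElem?_append_right (by simp only [List.length_append]; omega)]
    rw [show (u ++ w).length = u.length + w.length by simp]
    exact wpow_getElem? _ _ _ (by omega)
  have hsu : ∀ x, x < u.length → s[x]? = t[x]? := by
    intro x hx
    rw [hsdef, List.getElem?_append_left (by simp only [List.length_append]; omega),
      List.getElem?_append_left hx, htdef, List.getElem?_append_left hx]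
  have hsw : ∀ x, u.length ≤ x → x < u.length + w.length → s[x]? = w[x - u.length]? := by
    intro x hx hx'
    rw [hsdef, List.getElem?_append_left (by simp only [List.length_append]; omega),
      List.getElem?_append_right hx]
  -- values of q at the two R positions
  have hq1 : q[a.length]? = some R := by
    have hq' : q = a ++ ([R] ++ (b ++ ([R] ++ c))) := by simp [hqdef]
    rw [hq', List.getElem?_append_right (le_refl _)]
    simp
  have hq2 : q[a.length + 1 + b.length]? = some R := by
    have hq' : q = (a ++ [R] ++ b) ++ ([R] ++ c) := by simp [hqdef]
    rw [hq', List.getElem?_append_right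
      (by simp only [List.length_append, List.length_cons, List.length_nil]; omega)]
    rw [show a.length + 1 + b.length - (a ++ [R] ++ b).length = 0 by
      simp only [List.length_append, List.length_cons, List.length_nil]; omega]
    simp
  have hx1 : s[pre.length + a.length]? = some R := (hsq a.length (by omega)).trans hq1
  have hx2 : s[pre.length + (a.length + 1 + b.length)]? = some R :=
    (hsq (a.length + 1 + b.length) (by omega)).trans hq2
  have hx2lt : pre.length + (a.length + 1 + b.length) < s.length := by omega
  -- helpers: q pieces
  have hqa : ∀ i, i < a.length → q[i]? = a[i]? := by
    intro i hi
    have hq' : q = a ++ ([R] ++ (b ++ ([R] ++ c))) := by simp [hqdef]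
    rw [hq', List.getElem?_append_left hi]
  have hqm : ∀ i, i < a.length + 1 + b.length → q[i]? = (a ++ [R] ++ b)[i]? := by
    intro i hi
    have hq' : q = (a ++ [R] ++ b) ++ ([R] ++ c) := by simp [hqdef]
    rw [hq', List.getElem?_append_left
      (by simp only [List.length_append, List.length_cons, List.length_nil]; omega)]
  have hqbc : ∀ i, q[(a.length + 1) + i]? = (b ++ [R] ++ c)[i]? := by
    intro i
    have hq' : q = (a ++ [R]) ++ (b ++ [R] ++ c) := by simp [hqdef]
    rw [hq', List.getElem?_append_right
      (by simp only [List.length_append, List.length_cons, List.length_nil]; omega)]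
    congr 1
    simp only [List.length_append, List.length_cons, List.length_nil]
    omega
  have hqc : ∀ i, q[(a.length + 1 + b.length + 1) + i]? = (c)[i]? := by
    intro i
    have hq' : q = (a ++ [R] ++ b ++ [R]) ++ c := by simp [hqdef]
    rw [hq', List.getElem?_append_right
      (by simp only [List.length_append, List.length_cons, List.length_nil]; omega)]
    congr 1
    simp only [List.length_append, List.length_cons, List.length_nil]
    omega
  rcases lt_or_ge (pre.length + a.length) u.length with h1 | h1
  · -- first R inside the leading copy of u : prove a <:+ a ++ [R] ++ b
    have ht1 : t[pre.length + a.length]? = some R := (hsu _ h1).symm.trans hx1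
    have hpt : pre.length + a.length < t.length := by
      rcases List.getElem?_eq_some_iff.mp ht1 with ⟨h', _⟩
      exact h'
    -- locate the second R: it must be in the periodic part
    have hx2B : u.length + w.length ≤ pre.length + (a.length + 1 + b.length) := by
      by_contra h2
      push_neg at h2
      rcases lt_or_ge (pre.length + (a.length + 1 + b.length)) u.length with h3 | h3
      · have ht2 : t[pre.length + (a.length + 1 + b.length)]? = some R :=
          (hsu _ h3).symm.trans hx2
        have := (List.getElem?_inj hpt hndt).mp (ht1.trans ht2.symm)
        omega
      · have hw2 : w[pre.length + (a.length + 1 + b.length) - u.length]? = some R :=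
          (hsw _ h3 h2).symm.trans hx2
        exact hdisj _ (List.mem_of_getElem? ht1) _ (List.mem_of_getElem? hw2) rfl
    have hmod : (pre.length + (a.length + 1 + b.length) - (u.length + w.length)) % t.length
        = pre.length + a.length := by
      have htp : t[(pre.length + (a.length + 1 + b.length)
          - (u.length + w.length)) % t.length]? = some R :=
        (hstx _ hx2B hx2lt).symm.trans hx2
      exact (List.getElem?_inj (Nat.mod_lt _ (by omega)) hndt).mp (htp.trans ht1.symm)
    right
    apply suffix_of_getElem? ?_
      (by simp only [List.length_append, List.length_cons, List.length_nil]; omega)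
    intro i hi
    rw [show (a ++ [R] ++ b).length - a.length = 1 + b.length by
      simp only [List.length_append, List.length_cons, List.length_nil]; omega]
    obtain ⟨hBle, hmodx⟩ := index_trick t.length (u.length + w.length)
      (pre.length + a.length) (pre.length + (a.length + 1 + b.length)) (1 + b.length)
      (pre.length + i) hmod hx2B (by omega) (by omega) (by omega)
    rw [← hqa i hi, ← hqm ((1 + b.length) + i) (by omega)]
    rw [← hsq i (by omega), ← hsq ((1 + b.length) + i) (by omega)]
    rw [hsu _ (by omega)]
    rw [hstx _ (by omega) (by omega)]
    rw [show pre.length + (1 + b.length + i) - (u.length + w.length)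
        = pre.length + i + (1 + b.length) - (u.length + w.length) by omega, hmodx]
  rcases lt_or_ge (pre.length + a.length) (u.length + w.length) with h1' | h1'
  · -- first R inside w : impossible
    exfalso
    have hw1 : w[pre.length + a.length - u.length]? = some R := (hsw _ h1 h1').symm.trans hx1
    have hpw : pre.length + a.length - u.length < w.length := by
      rcases List.getElem?_eq_some_iff.mp hw1 with ⟨h', _⟩
      exact h'
    rcases lt_or_ge (pre.length + (a.length + 1 + b.length)) (u.length + w.length) with h2 | h2
    · have hw2 : w[pre.length + (a.length + 1 + b.length) - u.length]? = some R :=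
        (hsw _ (by omega) h2).symm.trans hx2
      have := (List.getElem?_inj hpw hndw).mp (hw1.trans hw2.symm)
      omega
    · have htp : t[(pre.length + (a.length + 1 + b.length)
          - (u.length + w.length)) % t.length]? = some R :=
        (hstx _ h2 hx2lt).symm.trans hx2
      exact hdisj _ (List.mem_of_getElem? htp) _ (List.mem_of_getElem? hw1) rfl
  · -- both R's in the periodic part : prove c <+: b ++ [R] ++ c
    have ht1 : t[(pre.length + a.length - (u.length + w.length)) % t.length]? = some R :=
      (hstx _ h1' (by omega)).symm.trans hx1
    have ht2 : t[(pre.length + (a.length + 1 + b.length)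
        - (u.length + w.length)) % t.length]? = some R :=
      (hstx _ (by omega) hx2lt).symm.trans hx2
    have hp0 : 0 < t.length := by
      rcases List.getElem?_eq_some_iff.mp ht1 with ⟨h', _⟩
      omega
    have hmod := (List.getElem?_inj (Nat.mod_lt _ hp0) hndt).mp (ht1.trans ht2.symm)
    have hdvd : t.length ∣ (1 + b.length) := by
      have h3 : (pre.length + a.length - (u.length + w.length))
          ≡ (pre.length + (a.length + 1 + b.length) - (u.length + w.length)) [MOD t.length] :=
        hmod
      rw [Nat.modEq_iff_dvd' (by omega)] at h3
      have h4 : pre.length + (a.length + 1 + b.length) - (u.length + w.length)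
          - (pre.length + a.length - (u.length + w.length)) = 1 + b.length := by omega
      rwa [h4] at h3
    left
    apply prefix_of_getElem? ?_
      (by simp only [List.length_append, List.length_cons, List.length_nil]; omega)
    intro i hi
    rw [← hqc i, ← hqbc i]
    rw [← hsq _ (by omega), ← hsq _ (by omega)]
    rw [hstx _ (by omega) (by omega), hstx _ (by omega) (by omega)]
    congr 1
    rw [show pre.length + (a.length + 1 + b.length + 1 + i) - (u.length + w.length)
        = (pre.length + (a.length + 1 + i) - (u.length + w.length)) + (1 + b.length) by omega]
    exact mod_shift _ _ _ hdvd

end Stmt19Aux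

theorem stmt_19 {α : Type*} (q : List α) (h : CondB3 q) : CondC3 q := by
  obtain ⟨k, u, v, w, hnd, hinf⟩ := h
  intro a b c R hq
  subst hq
  rcases Stmt19Aux.key u v w k hnd a b c R hinf with hpre | hsuf
  · obtain ⟨r, hr⟩ := hpre
    refine ⟨[], r, ?_⟩
    simp only [List.append_assoc, List.nil_append] at hr ⊢
    rw [hr]
  · obtain ⟨l, hl⟩ := hsuf
    refine ⟨l, [], ?_⟩
    simp only [List.append_assoc, List.append_nil] at hl ⊢
    rw [← List.append_assoc l a, hl]
    simp [List.append_assoc]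
end
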